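/- arXiv:1612.06772 — 2 statements merged into one kernel-verified Lean document; each statement's English description precedes it below -/
import Mathlib

section
/- For f in the Schwartz space on ℝⁿ, u ∈ ℝⁿ, and -1 < k < n - 1, the extension g(x) = |x|^{-(k+1)} D_u^k f(x/|x|) of the weighted divergent beam transform is locally integrable on ℝⁿ. -/
open MeasureTheory Real Set Metric
open scoped RealInnerProductSpace

noncomputable section

abbrev E (n : ℕ) := EuclideanSpace ℝ (Fin n)

lemma aux_int_rpow (n : ℕ) (s R : ℝ) (hs : 0 < s) (hsn : s < n) :
    IntegrableOn (fun x : E n => ‖x‖ ^ (-s)) (closedBall 0 R) volume := by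
  have hmeas : Measurable fun x : E n => ‖x‖ ^ (-s) := by fun_prop
  refine ⟨hmeas.aestronglyMeasurable.restrict, ?_⟩
  rw [hasFiniteIntegral_iff_norm]
  have hnn : ∀ x : E n, 0 ≤ ‖x‖ ^ (-s) := fun x => rpow_nonneg (norm_nonneg x) _
  have h1 : ∀ x : E n, ENNReal.ofReal ‖‖x‖ ^ (-s)‖ = ENNReal.ofReal (‖x‖ ^ (-s)) := by
    intro x; rw [Real.norm_of_nonneg (hnn x)]
  simp_rw [h1]
  rw [lintegral_eq_lintegral_meas_le _ (Filter.Eventually.of_forall hnn)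
    (hmeas.aemeasurable.restrict)]
  set μ := volume.restrict (closedBall (0 : E n) R)
  set c := volume (ball (0 : E n) 1) with hc
  have hb : ∀ t : ℝ, t ∈ Ioi (0:ℝ) →
      μ {a : E n | t ≤ ‖a‖ ^ (-s)} ≤
        min (volume (closedBall (0 : E n) R))
          (ENNReal.ofReal (t ^ (-(n : ℝ)/s)) * c) := by
    intro t ht
    rw [mem_Ioi] at ht
    refine le_min ?_ ?_
    · rw [Measure.restrict_apply' measurableSet_closedBall]
      exact measure_mono inter_subset_right
    · have hsub : {a : E n | t ≤ ‖a‖ ^ (-s)} ⊆ closedBall 0 (t ^ (-s⁻¹)) := by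
        intro a ha
        simp only [mem_setOf_eq] at ha
        simp only [mem_closedBall, dist_zero_right]
        have h2 : (‖a‖ ^ (-s)) ^ (-s⁻¹) ≤ t ^ (-s⁻¹) :=
          Real.rpow_le_rpow_of_nonpos ht ha (by simp [le_of_lt, inv_pos.mpr hs])
        rwa [← Real.rpow_mul (norm_nonneg a), neg_mul_neg, mul_inv_cancel₀ hs.ne',
          Real.rpow_one] at h2
      calc μ {a : E n | t ≤ ‖a‖ ^ (-s)} ≤ volume (closedBall (0 : E n) (t ^ (-s⁻¹))) :=
            le_trans (Measure.restrict_apply_le _ _) (measure_mono hsub)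
        _ = ENNReal.ofReal ((t ^ (-s⁻¹)) ^ Module.finrank ℝ (E n)) * c :=
            Measure.addHaar_closedBall _ _ (by positivity)
        _ = ENNReal.ofReal (t ^ (-(n : ℝ)/s)) * c := by
            rw [← Real.rpow_natCast (t ^ (-s⁻¹)), ← Real.rpow_mul ht.le,
              finrank_euclideanSpace_fin]
            norm_num
            ring_nf
  calc ∫⁻ t in Ioi (0:ℝ), μ {a : E n | t ≤ ‖a‖ ^ (-s)}
      ≤ ∫⁻ t in Ioi (0:ℝ), min (volume (closedBall (0 : E n) R))
          (ENNReal.ofReal (t ^ (-(n : ℝ)/s)) * c) :=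
        setLIntegral_mono' measurableSet_Ioi hb
    _ ≤ (∫⁻ t in Ioc (0:ℝ) 1, volume (closedBall (0 : E n) R)) +
        ∫⁻ t in Ioi (1:ℝ), ENNReal.ofReal (t ^ (-(n : ℝ)/s)) * c := by
        rw [← Ioc_union_Ioi_eq_Ioi (zero_le_one : (0:ℝ) ≤ 1)]
        refine le_trans (lintegral_union_le _ _ _) (add_le_add ?_ ?_)
        · exact setLIntegral_mono' measurableSet_Ioc (fun t _ => min_le_left _ _)
        · exact setLIntegral_mono' measurableSet_Ioi (fun t _ => min_le_right _ _)
    _ < ⊤ := by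
        apply ENNReal.add_lt_top.mpr
        constructor
        · rw [setLIntegral_const]
          exact ENNReal.mul_lt_top measure_closedBall_lt_top (by simp [measure_Ioc_lt_top])
        · rw [lintegral_mul_const' c _ (by exact measure_ball_lt_top.ne)]
          apply ENNReal.mul_lt_top _ measure_ball_lt_top
          apply IntegrableOn.setLIntegral_lt_top
          apply integrableOn_Ioi_rpow_of_lt _ one_pos
          rw [div_lt_iff₀ hs] at *
          nlinarith

lemma aux_bound (n : ℕ) (f : SchwartzMap (E n) ℝ) (u : E n) (k : ℝ) (hk : -1 < k) :
    ∃ B : ℝ, 0 ≤ B ∧ ∀ σ : E n, ‖σ‖ = 1 →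
      ‖∫ ρ in Ioi (0:ℝ), f (u + ρ • σ) * ρ ^ k‖ ≤ B := by
  set m : ℕ := ⌊k⌋.toNat + 2 with hm_def
  have hm : k + 1 < (m : ℝ) := by
    have h1 : k < (⌊k⌋ : ℝ) + 1 := Int.lt_floor_add_one k
    have h2 : ((⌊k⌋ : ℤ) : ℝ) ≤ ((⌊k⌋.toNat : ℕ) : ℝ) := by exact_mod_cast Int.self_le_toNat _
    push_cast [hm_def]
    linarith
  obtain ⟨C, hCpos, hC⟩ := f.decay m 0
  obtain ⟨C0, hC0pos, hC0⟩ := f.decay 0 0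
  simp only [norm_iteratedFDeriv_zero, pow_zero, one_mul] at hC hC0
  set R0 : ℝ := max 1 (2 * ‖u‖) with hR0_def
  have hR01 : (1:ℝ) ≤ R0 := le_max_left _ _
  have hR0pos : (0:ℝ) < R0 := lt_of_lt_of_le one_pos hR01
  set h : ℝ → ℝ := fun ρ => if ρ ≤ R0 then C0 * ρ ^ k else (C * 2 ^ m) * ρ ^ (k - m)
    with hh_def
  have hlt : k - (m:ℝ) < -1 := by linarith
  have hint : IntegrableOn h (Ioi (0:ℝ)) volume := by
    rw [← Ioc_union_Ioi_eq_Ioi hR0pos.le]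
    apply IntegrableOn.union
    · have h1 : IntegrableOn (fun ρ : ℝ => C0 * ρ ^ k) (Ioc 0 R0) volume :=
        (intervalIntegral.intervalIntegrable_rpow' hk).1.const_mul C0
      apply h1.congr_fun ?_ measurableSet_Ioc
      intro ρ hρ
      simp [hh_def, hρ.2]
    · have h2 : IntegrableOn (fun ρ : ℝ => (C * 2 ^ m) * ρ ^ (k - m)) (Ioi R0) volume :=
        (integrableOn_Ioi_rpow_of_lt hlt hR0pos).const_mul _
      apply h2.congr_fun ?_ measurableSet_Ioi
      intro ρ hρ
      simp [hh_def, not_le.mpr (mem_Ioi.mp hρ)]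
  refine ⟨∫ ρ in Ioi (0:ℝ), h ρ, ?_, ?_⟩
  · apply setIntegral_nonneg measurableSet_Ioi
    intro ρ hρ
    have hρ0 : (0:ℝ) < ρ := hρ
    by_cases hρR : ρ ≤ R0 <;> simp only [hh_def, hρR, if_true, if_false] <;> positivity
  · intro σ hσ
    apply norm_integral_le_of_norm_le hint
    filter_upwards [ae_restrict_mem measurableSet_Ioi] with ρ hρ
    have hρ0 : (0:ℝ) < ρ := hρ
    have hnorm : ‖(f (u + ρ • σ) : ℝ) * ρ ^ k‖ = ‖f (u + ρ • σ)‖ * ρ ^ k := by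
      rw [norm_mul, Real.norm_of_nonneg (rpow_nonneg hρ0.le k)]
    rw [hnorm]
    by_cases hρR : ρ ≤ R0
    · simp only [hh_def, hρR, if_true]
      exact mul_le_mul_of_nonneg_right (hC0 _) (rpow_nonneg hρ0.le k)
    · simp only [hh_def, hρR, if_false]
      push_neg at hρR
      have hρ1 : (1:ℝ) < ρ := lt_of_le_of_lt hR01 hρR
      have hu2 : 2 * ‖u‖ < ρ := lt_of_le_of_lt (le_max_right _ _) hρR
      have hy : ρ / 2 ≤ ‖u + ρ • σ‖ := by
        have h3 : ‖ρ • σ‖ = ρ := by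
          rw [norm_smul, Real.norm_of_nonneg hρ0.le, hσ, mul_one]
        have h4 : ‖ρ • σ‖ ≤ ‖u + ρ • σ‖ + ‖u‖ := by
          calc ‖ρ • σ‖ = ‖(u + ρ • σ) - u‖ := by rw [add_sub_cancel_left]
            _ ≤ ‖u + ρ • σ‖ + ‖u‖ := norm_sub_le _ _
        rw [h3] at h4
        linarith
      have hy0 : (0:ℝ) < ρ / 2 := by linarith
      have hfb : ‖f (u + ρ • σ)‖ ≤ C * 2 ^ m / ρ ^ m := by
        have h5 : (ρ/2) ^ m * ‖f (u + ρ • σ)‖ ≤ C :=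
          le_trans (mul_le_mul_of_nonneg_right
            (pow_le_pow_left₀ hy0.le hy m) (norm_nonneg _)) (hC _)
        rw [div_pow] at h5
        have hρm : (0:ℝ) < ρ ^ m := by positivity
        rw [div_mul_eq_mul_div, div_le_iff₀ (by positivity : (0:ℝ) < (2:ℝ)^m)] at h5
        rw [le_div_iff₀ hρm, mul_comm]
        exact h5
      calc ‖f (u + ρ • σ)‖ * ρ ^ k ≤ (C * 2 ^ m / ρ ^ m) * ρ ^ k :=
            mul_le_mul_of_nonneg_right hfb (rpow_nonneg hρ0.le k)
        _ = C * 2 ^ m * ρ ^ (k - (m:ℝ)) := by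
            rw [Real.rpow_sub hρ0, Real.rpow_natCast]
            ring

lemma aux_meas (n : ℕ) (f : SchwartzMap (E n) ℝ) (u : E n) (k : ℝ) :
    StronglyMeasurable
      (fun x : E n => ∫ ρ in Ioi (0:ℝ), (f (u + ρ • (‖x‖⁻¹ • x)) : ℝ) * ρ ^ k) := by
  apply StronglyMeasurable.integral_prod_right'
    (f := fun p : E n × ℝ => (f (u + p.2 • (‖p.1‖⁻¹ • p.1)) : ℝ) * p.2 ^ k)
  apply Measurable.stronglyMeasurable
  have m1 : Measurable fun p : E n × ℝ => u + p.2 • (‖p.1‖⁻¹ • p.1) := by fun_prop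
  exact (f.continuous.measurable.comp m1).mul (by fun_prop)

/-- Local integrability of the homogeneous extension of the weighted divergent
beam transform, for -1 < k < n - 1. -/
theorem stmt2 (n : ℕ) (f : SchwartzMap (E n) ℝ) (u : E n) (k : ℝ)
    (hk : -1 < k) (hk' : k < (n : ℝ) - 1) :
    LocallyIntegrable
      (fun x : E n => ‖x‖ ^ (-(k + 1)) * ∫ ρ in Ioi (0 : ℝ), f (u + ρ • (‖x‖⁻¹ • x)) * ρ ^ k)
      volume := by
  obtain ⟨B, hB0, hB⟩ := aux_bound n f u k hk
  rw [locallyIntegrable_iff]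
  intro K hK
  obtain ⟨R, hR⟩ := hK.isBounded.subset_closedBall 0
  refine IntegrableOn.mono_set ?_ hR
  have hs : (0:ℝ) < k + 1 := by linarith
  have hsn : k + 1 < (n:ℝ) := by linarith
  have hint := (aux_int_rpow n (k+1) R hs hsn).const_mul B
  refine Integrable.mono' hint ?_ ?_
  · exact (((by fun_prop : Measurable fun x : E n => ‖x‖ ^ (-(k+1))).stronglyMeasurable).mul
      (aux_meas n f u k)).aestronglyMeasurable.restrict
  · filter_upwards with x
    rw [norm_mul, Real.norm_of_nonneg (rpow_nonneg (norm_nonneg x) _)]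
    rcases eq_or_ne x 0 with rfl | hx
    · rw [norm_zero, Real.zero_rpow (show -(k+1) ≠ 0 from ne_of_lt (by linarith))]
      simp
    · have h1 : ‖‖x‖⁻¹ • x‖ = 1 := by
        rw [norm_smul, Real.norm_of_nonneg (by positivity),
          inv_mul_cancel₀ (norm_ne_zero_iff.mpr hx)]
      calc ‖x‖ ^ (-(k+1)) * ‖∫ ρ in Ioi (0:ℝ), (f (u + ρ • (‖x‖⁻¹ • x)) : ℝ) * ρ ^ k‖
          ≤ ‖x‖ ^ (-(k+1)) * B :=
            mul_le_mul_of_nonneg_left (hB _ h1) (rpow_nonneg (norm_nonneg x) _)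
        _ = B * ‖x‖ ^ (-(k+1)) := mul_comm _ _
end
end

section
/- For Schwartz f on ℝⁿ, u ∈ ℝⁿ, β ∈ Sⁿ⁻¹, and a function h : ℝ → ℝ that is positively homogeneous of degree k − n + 1 (h(λt) = λ^{k-n+1} h(t) for λ > 0) and locally integrable, the following holds: ∫_{Sⁿ⁻¹} D_u^k f(σ) h(−σ·β) dσ = ∫_{ℝⁿ} f(x) h((u − x)·β) dx, where D_u^k f(σ) = ∫_0^∞ f(u+ρσ) ρ^k dρ and k ∈ ℤ, k ≥ 0. -/
open MeasureTheory Real Set Metric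
open scoped RealInnerProductSpace

noncomputable section

/-- ∫_{S^{n-1}} D_u^k f(σ) h(-σ·β) dσ = ∫_{ℝⁿ} f(x) h((u-x)·β) dx for h positively
homogeneous of degree k - n + 1. -/
theorem stmt9 (n : ℕ) (hn : 2 ≤ n) (k : ℕ) (f : SchwartzMap (E n) ℝ) (u β : E n)
    (hβ : ‖β‖ = 1) (h : ℝ → ℝ) (hmeas : Measurable h) (hloc : LocallyIntegrable h volume)
    (hhom : ∀ l : ℝ, 0 < l → ∀ t : ℝ, h (l * t) = l ^ ((k : ℝ) - n + 1) * h t) :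
    ∫ σ : sphere (0 : E n) 1,
        (∫ ρ in Ioi (0 : ℝ), f (u + ρ • (σ : E n)) * ρ ^ k) * h (-⟪(σ : E n), β⟫)
        ∂(volume : Measure (E n)).toSphere
      = ∫ x : E n, f x * h ⟪u - x, β⟫ := by
  have hβ0 : β ≠ 0 := by
    intro h0; rw [h0, norm_zero] at hβ; norm_num at hβ
  haveI : Nontrivial (E n) := nontrivial_of_ne β 0 hβ0
  by_cases hcase : n ≤ k + 1
  case neg =>
    -- here (k:ℝ) - n + 1 ≤ -1, so local integrability forces h ≡ 0
    have hα : (k : ℝ) - n + 1 ≤ -1 := by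
      have : (k : ℝ) + 2 ≤ n := by exact_mod_cast Nat.succ_le_of_lt (by omega)
      linarith
    have key : ∀ a b c : ℝ, a < b → 0 ∈ uIcc a b →
        IntegrableOn (fun t : ℝ => t⁻¹ * c) (Ioo a b) volume → c = 0 := by
      intro a b c hab h0m hint
      by_contra hc
      have hio : IntegrableOn (fun t : ℝ => t⁻¹) (Ioo a b) volume := by
        have h3 := hint.mul_const c⁻¹
        have he : (fun t : ℝ => t⁻¹ * c * c⁻¹) =ᵐ[volume.restrict (Ioo a b)] fun t => t⁻¹ := by
          refine Filter.Eventually.of_forall fun t => ?_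
          simp only []; rw [mul_assoc, mul_inv_cancel₀ hc, mul_one]
        exact h3.congr he
      have h2 : IntervalIntegrable (fun t : ℝ => t⁻¹) volume a b := by
        rw [intervalIntegrable_iff_integrableOn_Ioo_of_le hab.le]
        exact hio
      rw [intervalIntegrable_inv_iff] at h2
      rcases h2 with h2 | h2
      · exact hab.ne h2
      · exact h2 h0m
    -- h 1 = 0
    have hIoo1 : IntegrableOn h (Ioo (0:ℝ) 1) volume :=
      (hloc.integrableOn_isCompact (isCompact_Icc (a := (0:ℝ)) (b := 1))).mono_set
        Ioo_subset_Icc_self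
    have h1z : h 1 = 0 := by
      refine key 0 1 (h 1) one_pos (by simp) ?_
      refine MeasureTheory.Integrable.mono hIoo1 ?_ ?_
      · exact (measurable_inv.mul_const _).aestronglyMeasurable
      · refine (ae_restrict_iff' measurableSet_Ioo).2 (Filter.Eventually.of_forall fun t ht => ?_)
        have ht1 := hhom t ht.1 1
        rw [mul_one] at ht1
        have hle : t⁻¹ ≤ t ^ ((k:ℝ) - n + 1) := by
          rw [← Real.rpow_neg_one t]
          exact Real.rpow_le_rpow_of_exponent_ge ht.1 ht.2.le hα
        calc ‖t⁻¹ * h 1‖ = t⁻¹ * |h 1| := by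
              rw [Real.norm_eq_abs, abs_mul, abs_inv, abs_of_pos ht.1]
          _ ≤ t ^ ((k:ℝ) - n + 1) * |h 1| :=
              mul_le_mul_of_nonneg_right hle (abs_nonneg _)
          _ = ‖h t‖ := by
              rw [ht1, Real.norm_eq_abs, abs_mul,
                abs_of_pos (Real.rpow_pos_of_pos ht.1 _)]
    -- h (-1) = 0
    have hIoo2 : IntegrableOn h (Ioo (-1:ℝ) 0) volume :=
      (hloc.integrableOn_isCompact (isCompact_Icc (a := (-1:ℝ)) (b := 0))).mono_set
        Ioo_subset_Icc_self
    have h2z : h (-1) = 0 := by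
      refine key (-1) 0 (h (-1)) (by norm_num) (by simp) ?_
      refine MeasureTheory.Integrable.mono hIoo2 ?_ ?_
      · exact (measurable_inv.mul_const _).aestronglyMeasurable
      · refine (ae_restrict_iff' measurableSet_Ioo).2 (Filter.Eventually.of_forall fun t ht => ?_)
        have htpos : (0:ℝ) < -t := by linarith [ht.2]
        have ht1 : h t = (-t) ^ ((k:ℝ) - n + 1) * h (-1) := by
          have := hhom (-t) htpos (-1)
          rwa [mul_neg_one, neg_neg] at this
        have hle : (-t)⁻¹ ≤ (-t) ^ ((k:ℝ) - n + 1) := by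
          rw [← Real.rpow_neg_one (-t)]
          exact Real.rpow_le_rpow_of_exponent_ge htpos (by linarith [ht.1]) hα
        calc ‖t⁻¹ * h (-1)‖ = (-t)⁻¹ * |h (-1)| := by
              rw [Real.norm_eq_abs, abs_mul, abs_inv, abs_of_neg ht.2]
          _ ≤ (-t) ^ ((k:ℝ) - n + 1) * |h (-1)| :=
              mul_le_mul_of_nonneg_right hle (abs_nonneg _)
          _ = ‖h t‖ := by
              rw [ht1, Real.norm_eq_abs, abs_mul,
                abs_of_pos (Real.rpow_pos_of_pos htpos _)]
    -- h 0 = 0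
    have h0z : h 0 = 0 := by
      have := hhom 2 two_pos 0
      rw [mul_zero] at this
      by_contra hc
      have h21 : (2:ℝ) ^ ((k:ℝ) - n + 1) = 1 := by
        have h' : ((2:ℝ) ^ ((k:ℝ) - n + 1) - 1) * h 0 = 0 := by
          rw [sub_mul, ← this, one_mul, sub_self]
        rcases mul_eq_zero.1 h' with h'' | h''
        · linarith [sub_eq_zero.1 h'']
        · exact absurd h'' hc
      have hlog := congrArg Real.log h21
      rw [Real.log_rpow two_pos, Real.log_one] at hlog
      have : (k:ℝ) - n + 1 = 0 := by
        have hl2 : Real.log 2 ≠ 0 := (Real.log_pos (by norm_num)).ne'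
        exact (mul_eq_zero.1 hlog).resolve_right hl2
      linarith
    have hzero : ∀ t : ℝ, h t = 0 := by
      intro t
      rcases lt_trichotomy t 0 with htneg | rfl | htpos
      · have := hhom (-t) (by linarith) (-1)
        rw [mul_neg_one, neg_neg] at this
        rw [this, h2z, mul_zero]
      · exact h0z
      · have := hhom t htpos 1
        rw [mul_one] at this
        rw [this, h1z, mul_zero]
    simp only [hzero, mul_zero, integral_zero]
  case pos =>
    set G : E n → ℝ := fun y => f (u + y) * h (-⟪y, β⟫) with hGdef
    set m : ℕ := k + 1 - n with hmdef
    have hmcast : ((m : ℝ)) = (k : ℝ) - n + 1 := by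
      rw [hmdef]; push_cast [Nat.cast_sub hcase]; ring
    have hpow : ∀ t : ℝ, t ^ ((k:ℝ) - n + 1) = t ^ m := by
      intro t; rw [← hmcast, Real.rpow_natCast]
    set C : ℝ := max |h 1| |h (-1)| with hCdef
    have hhbound : ∀ t : ℝ, t ≠ 0 → |h t| ≤ C * |t| ^ m := by
      intro t ht
      rcases ht.lt_or_gt with htneg | htpos
      · have h1 : h t = (-t) ^ ((k:ℝ) - n + 1) * h (-1) := by
          have := hhom (-t) (by linarith) (-1); rwa [mul_neg_one, neg_neg] at this
        rw [h1, hpow, abs_mul, abs_pow, abs_neg, mul_comm]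
        exact mul_le_mul_of_nonneg_right (le_max_right _ _) (pow_nonneg (abs_nonneg t) m)
      · have h1 : h t = t ^ ((k:ℝ) - n + 1) * h 1 := by
          have := hhom t htpos 1; rwa [mul_one] at this
        rw [h1, hpow, abs_mul, abs_pow, mul_comm]
        exact mul_le_mul_of_nonneg_right (le_max_left _ _) (pow_nonneg (abs_nonneg t) m)
    -- the hyperplane orthogonal to β is null
    have hker : volume {y : E n | ⟪y, β⟫ = 0} = 0 := by
      have hne : LinearMap.ker (innerSL ℝ β : E n →ₗ[ℝ] ℝ) ≠ ⊤ := by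
        intro htop
        have hmem : β ∈ LinearMap.ker (innerSL ℝ β : E n →ₗ[ℝ] ℝ) := htop ▸ Submodule.mem_top
        rw [LinearMap.mem_ker] at hmem
        simp only [ContinuousLinearMap.coe_coe, innerSL_apply_apply, real_inner_self_eq_norm_sq, hβ] at hmem
        norm_num at hmem
      have h0 := Measure.addHaar_submodule (volume : Measure (E n)) _ hne
      have hsets : {y : E n | ⟪y, β⟫ = 0} = (LinearMap.ker (innerSL ℝ β : E n →ₗ[ℝ] ℝ) : Set (E n)) := by
        ext y
        simp only [mem_setOf_eq, SetLike.mem_coe, LinearMap.mem_ker, ContinuousLinearMap.coe_coe, innerSL_apply_apply]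
        rw [real_inner_comm]
      rw [hsets]; exact h0
    -- integrability of G
    have hA : Integrable (fun y : E n => ‖y - u‖ ^ m * ‖f y‖) volume := by
      have hbig : Integrable (fun y : E n =>
          2 ^ m * (‖y‖ ^ m * ‖f y‖) + 2 ^ m * ‖u‖ ^ m * ‖f y‖) volume :=
        ((f.integrable_pow_mul volume m).const_mul _).add
          ((f.integrable (μ := volume)).norm.const_mul _)
      refine hbig.mono' ?_ (Filter.Eventually.of_forall fun y => ?_)
      · exact (((continuous_id.sub continuous_const).norm.pow m).mul
          f.continuous.norm).aestronglyMeasurable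
      · have h1 : ‖y - u‖ ^ m ≤ 2 ^ m * ‖y‖ ^ m + 2 ^ m * ‖u‖ ^ m := by
          have hstep : ‖y - u‖ ≤ 2 * max ‖y‖ ‖u‖ := by
            refine (norm_sub_le _ _).trans ?_
            have := le_max_left ‖y‖ ‖u‖
            have := le_max_right ‖y‖ ‖u‖
            linarith
          calc ‖y - u‖ ^ m ≤ (2 * max ‖y‖ ‖u‖) ^ m :=
                pow_le_pow_left₀ (norm_nonneg _) hstep m
            _ = 2 ^ m * max ‖y‖ ‖u‖ ^ m := mul_pow _ _ _
            _ ≤ 2 ^ m * (‖y‖ ^ m + ‖u‖ ^ m) := by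
                have : max ‖y‖ ‖u‖ ^ m ≤ ‖y‖ ^ m + ‖u‖ ^ m := by
                  rcases max_cases ‖y‖ ‖u‖ with ⟨hm', _⟩ | ⟨hm', _⟩ <;> rw [hm']
                  · exact le_add_of_nonneg_right (pow_nonneg (norm_nonneg _) m)
                  · exact le_add_of_nonneg_left (pow_nonneg (norm_nonneg _) m)
                have h2m : (0:ℝ) ≤ 2 ^ m := by positivity
                nlinarith
            _ = 2 ^ m * ‖y‖ ^ m + 2 ^ m * ‖u‖ ^ m := by ring
        calc ‖‖y - u‖ ^ m * ‖f y‖‖ = ‖y - u‖ ^ m * ‖f y‖ := by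
              rw [Real.norm_eq_abs, abs_of_nonneg (by positivity)]
          _ ≤ (2 ^ m * ‖y‖ ^ m + 2 ^ m * ‖u‖ ^ m) * ‖f y‖ :=
              mul_le_mul_of_nonneg_right h1 (norm_nonneg _)
          _ = 2 ^ m * (‖y‖ ^ m * ‖f y‖) + 2 ^ m * ‖u‖ ^ m * ‖f y‖ := by ring
    have hC2 : Integrable (fun y : E n => ‖y‖ ^ m * ‖f (u + y)‖) volume := by
      have := hA.comp_add_left u
      simpa using this
    have hGm : AEStronglyMeasurable G volume := by
      refine Measurable.aestronglyMeasurable ?_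
      refine Measurable.mul ?_ (hmeas.comp ?_)
      · exact f.continuous.measurable.comp (measurable_const.add measurable_id)
      · exact (Continuous.inner continuous_id continuous_const).neg.measurable
    have hGint : Integrable G volume := by
      refine (hC2.const_mul C).mono' hGm ?_
      have hae : ∀ᵐ y : E n ∂volume, ⟪y, β⟫ ≠ 0 := by
        rw [ae_iff]
        convert hker using 2
        simp
      filter_upwards [hae] with y hy
      have h1 : |h (-⟪y, β⟫)| ≤ C * |⟪y, β⟫| ^ m := by
        have := hhbound (-⟪y, β⟫) (by simpa using hy)
        rwa [abs_neg] at this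
      have h2 : |⟪y, β⟫| ≤ ‖y‖ := by
        have := abs_real_inner_le_norm y β
        rwa [hβ, mul_one] at this
      calc ‖G y‖ = ‖f (u + y)‖ * |h (-⟪y, β⟫)| := by
            simp [hGdef, Real.norm_eq_abs, abs_mul]
        _ ≤ ‖f (u + y)‖ * (C * |⟪y, β⟫| ^ m) :=
            mul_le_mul_of_nonneg_left h1 (norm_nonneg _)
        _ ≤ ‖f (u + y)‖ * (C * ‖y‖ ^ m) := by
            gcongr
        _ = C * (‖y‖ ^ m * ‖f (u + y)‖) := by ring
    -- polar coordinates
    have hMP := Measure.measurePreserving_homeomorphUnitSphereProd (volume : Measure (E n))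
    rw [finrank_euclideanSpace_fin] at hMP
    set ν : Measure (sphere (0 : E n) 1 × Ioi (0:ℝ)) :=
      (volume : Measure (E n)).toSphere.prod (Measure.volumeIoiPow (n - 1)) with hν
    set g' : sphere (0 : E n) 1 × Ioi (0:ℝ) → ℝ := fun p => G ((p.2 : ℝ) • (p.1 : E n)) with hg'
    have hcomp : ∀ x : ({0}ᶜ : Set (E n)), g' (homeomorphUnitSphereProd (E n) x) = G x := by
      intro x
      rw [hg']
      simp only []
      rw [← homeomorphUnitSphereProd_symm_apply_coe (E n), Homeomorph.symm_apply_apply]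
    have hg'int : Integrable g' ν := by
      rw [← hMP.integrable_comp_emb (Homeomorph.measurableEmbedding _)]
      have heq : (g' ∘ (homeomorphUnitSphereProd (E n))) = fun x : ({0}ᶜ : Set (E n)) => G x :=
        funext hcomp
      rw [heq]
      have hemb := MeasurableEmbedding.subtype_coe (measurableSet_singleton (0 : E n)).compl
      have h2 : IntegrableOn G {(0 : E n)}ᶜ volume := hGint.integrableOn
      rw [hemb.integrableOn_iff_comap (by rw [Subtype.range_coe])] at h2
      simpa [IntegrableOn, Subtype.coe_preimage_self, Measure.restrict_univ, Function.comp_def] using h2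
    have step2 : ∫ y, G y = ∫ p, g' p ∂ν := by
      rw [← hMP.integral_comp (Homeomorph.measurableEmbedding _) g']
      have heq2 : ∫ x : ({0}ᶜ : Set (E n)), g' (homeomorphUnitSphereProd (E n) x)
            ∂(Measure.comap Subtype.val volume)
          = ∫ x : ({0}ᶜ : Set (E n)), G x ∂(Measure.comap Subtype.val volume) :=
        integral_congr_ae (Filter.Eventually.of_forall hcomp)
      rw [heq2, integral_subtype_comap (measurableSet_singleton (0 : E n)).compl (fun x => G x),
        restrict_compl_singleton]
    have step3 : ∫ p, g' p ∂ν = ∫ σ : sphere (0 : E n) 1, (∫ ρ : Ioi (0:ℝ), g' (σ, ρ)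
        ∂(Measure.volumeIoiPow (n - 1))) ∂(volume : Measure (E n)).toSphere :=
      integral_prod _ hg'int
    have step4 : ∀ σ : sphere (0 : E n) 1, (∫ ρ : Ioi (0:ℝ), g' (σ, ρ)
        ∂(Measure.volumeIoiPow (n - 1)))
        = (∫ ρ in Ioi (0:ℝ), f (u + ρ • (σ : E n)) * ρ ^ k) * h (-⟪(σ : E n), β⟫) := by
      intro σ
      rw [← integral_mul_const]
      rw [Measure.volumeIoiPow]
      simp only [ENNReal.ofReal]
      rw [integral_withDensity_eq_integral_smul
        ((measurable_subtype_coe.pow_const _).real_toNNReal) (fun ρ : Ioi (0:ℝ) => g' (σ, ρ))]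
      simp only [hg']
      rw [integral_subtype_comap measurableSet_Ioi
        (fun a : ℝ => (a ^ (n - 1)).toNNReal • G (a • (σ : E n)))]
      refine setIntegral_congr_fun measurableSet_Ioi fun a ha => ?_
      have ha0 : (0:ℝ) < a := ha
      have hsm : ((a ^ (n - 1)).toNNReal : ℝ) = a ^ (n - 1) :=
        Real.coe_toNNReal _ (pow_nonneg ha0.le _)
      rw [NNReal.smul_def, hsm]
      simp only [hGdef]
      rw [smul_eq_mul]
      have hinner : ⟪a • (σ : E n), β⟫ = a * ⟪(σ : E n), β⟫ := real_inner_smul_left _ _ _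
      rw [hinner, ← mul_neg, hhom a ha0, hpow]
      have hexp : (a:ℝ) ^ (n - 1) * a ^ m = a ^ k := by
        rw [← pow_add]; congr 1; omega
      calc a ^ (n - 1) * (f (u + a • (σ : E n)) * (a ^ m * h (-⟪(σ : E n), β⟫)))
          = (a ^ (n - 1) * a ^ m) * f (u + a • (σ : E n)) * h (-⟪(σ : E n), β⟫) := by ring
        _ = f (u + a • (σ : E n)) * a ^ k * h (-⟪(σ : E n), β⟫) := by rw [hexp]; ring
    simp only [← step4]
    rw [← step3, ← step2]
    -- remaining : ∫ y, G y = ∫ x, f x * h ⟪u - x, β⟫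
    rw [← integral_add_right_eq_self (fun x : E n => f x * h ⟪u - x, β⟫) u]
    refine integral_congr_ae (Filter.Eventually.of_forall fun y => ?_) |>.symm
    have hsub : u - (y + u) = -y := by abel
    rw [hGdef]
    simp only []
    rw [hsub, inner_neg_left, add_comm y u]
end
end
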